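/- Let F be a field, let (i_1, …, i_N) be any reduced word for the longest element w₀ of S_{r+1}, and let γ_1, …, γ_N be the induced enumeration of the positive roots Φ⁺. For every k ∈ {1, …, N}, every z ∈ F, and every g ∈ G_k, there exists a unique g′ ∈ G_k such that e_{−γ_k}(z) · g = g′ · e_{−γ_k}(z) in GL_{r+1}(F). -/

import Mathlib

open Fin.NatCast

/-- The simple transposition `s_k` of `S_{r+1}` (0-indexed: it swaps `k` and `k+1`;
it corresponds to the 1-based simple transposition `s_{k+1}`). -/
def sT (r k : ℕ) : Equiv.Perm (Fin (r + 1)) :=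
  Equiv.swap (k : Fin (r + 1)) ((k + 1 : ℕ) : Fin (r + 1))

/-- The permutation `s_{i_N} s_{i_{N−1}} ⋯ s_{i_{k+2}} s_{i_{k+1}}` used to define
`γ_{k+1}` from the word `w` (here `k` is 0-indexed). -/
def piPerm (r : ℕ) (w : List ℕ) (k : ℕ) : Equiv.Perm (Fin (r + 1)) :=
  (((w.drop (k + 1)).reverse).map (sT r)).prod

/-- The first index of the positive root `γ_{k+1} = e_{π(a)} − e_{π(a+1)}`, where
`α_{i_{k+1}} = e_a − e_{a+1}` (0-indexed `k`). -/
def gFst (r : ℕ) (w : List ℕ) (k : ℕ) : Fin (r + 1) :=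
  piPerm r w k ((w.getD k 0 : ℕ) : Fin (r + 1))

/-- The second index of the positive root `γ_{k+1}`. -/
def gSnd (r : ℕ) (w : List ℕ) (k : ℕ) : Fin (r + 1) :=
  piPerm r w k ((w.getD k 0 + 1 : ℕ) : Fin (r + 1))

variable (F : Type*) [Field F]

/-- The elementary unipotent `e_{γ_{k+1}}(t) = 1 + t·E_{x,y}` for the root
`γ_{k+1} = e_x − e_y` (0-indexed `k`). -/
def ePosM (r : ℕ) (w : List ℕ) (k : ℕ) (t : F) :
    Matrix (Fin (r + 1)) (Fin (r + 1)) F :=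
  1 + Matrix.single (gFst r w k) (gSnd r w k) t

/-- The elementary unipotent `e_{−γ_{k+1}}(t) = 1 + t·E_{y,x}` for the root
`γ_{k+1} = e_x − e_y` (0-indexed `k`). -/
def eNegM (r : ℕ) (w : List ℕ) (k : ℕ) (t : F) :
    Matrix (Fin (r + 1)) (Fin (r + 1)) F :=
  1 + Matrix.single (gSnd r w k) (gFst r w k) t

/-- The set `G_k` (1-based `k`): all products
`(∏_{j=1}^{k−1} e_{−γ_j}(t_j)) · (∏_{j=k+1}^{N} e_{γ_j}(t_j))`, factors taken in
increasing order of `j`, with `N = r(r+1)/2`. -/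
def cellG (r : ℕ) (w : List ℕ) (k : ℕ) :
    Set (Matrix (Fin (r + 1)) (Fin (r + 1)) F) :=
  {g | ∃ t : ℕ → F,
    g = (((List.range (k - 1)).map fun j => eNegM F r w j (t j)).prod) *
        (((List.range (r * (r + 1) / 2 - k)).map fun j =>
            ePosM F r w (k + j) (t (k + j))).prod)}


theorem Equiv.Perm.apply_inv_self {α : Type*} (σ : Equiv.Perm α) (x : α) : σ (σ⁻¹ x) = x :=
  σ.apply_symm_apply x

theorem Equiv.Perm.inv_apply_self {α : Type*} (σ : Equiv.Perm α) (x : α) : σ⁻¹ (σ x) = x :=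
  σ.symm_apply_apply x

namespace CellAux
variable {r : ℕ}

/-- product of the word, `sT w[0] * sT w[1] * ⋯`. -/
def sig (r : ℕ) (v : List ℕ) : Equiv.Perm (Fin (r+1)) := (v.map (sT r)).prod

@[simp] lemma sig_nil : sig r [] = 1 := rfl
@[simp] lemma sig_cons (a : ℕ) (v : List ℕ) : sig r (a :: v) = sT r a * sig r v := by
  simp [sig]
lemma sig_append (u v : List ℕ) : sig r (u ++ v) = sig r u * sig r v := by
  simp [sig]

lemma sT_mul_self (a : ℕ) : sT r a * sT r a = 1 := by
  simp [sT, Equiv.swap_mul_self]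

lemma sT_inv (a : ℕ) : (sT r a)⁻¹ = sT r a := by
  rw [eq_comm, eq_inv_iff_mul_eq_one, sT_mul_self]

lemma sig_reverse (v : List ℕ) : sig r v.reverse = (sig r v)⁻¹ := by
  induction v with
  | nil => simp
  | cons a v ih =>
      simp only [List.reverse_cons, sig_append, sig_cons, ih, mul_inv_rev, sT_inv]
      simp [sig]

lemma piPerm_eq (v : List ℕ) (j : ℕ) : piPerm r v j = (sig r (v.drop (j+1)))⁻¹ := by
  rw [piPerm, ← sig_reverse]; rfl

lemma drop_drop' (l : List ℕ) (i j : ℕ) : (l.drop i).drop j = l.drop (i+j) := by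
  rw [List.drop_drop, Nat.add_comm]

lemma getD_drop' (l : List ℕ) (i j d : ℕ) : (l.drop i).getD j d = l.getD (i+j) d := by
  rcases lt_or_ge (i+j) l.length with h | h
  · rw [List.getD_eq_getElem _ _ (by simp; omega), List.getD_eq_getElem _ _ h]
    simp [List.getElem_drop]
  · rw [List.getD_eq_default _ _ (by simp; omega), List.getD_eq_default _ _ h]

lemma gFst_drop (v : List ℕ) (i j : ℕ) : gFst r (v.drop i) j = gFst r v (i+j) := by
  unfold gFst
  rw [piPerm, piPerm, drop_drop', getD_drop']
  ring_nf
lemma gSnd_drop (v : List ℕ) (i j : ℕ) : gSnd r (v.drop i) j = gSnd r v (i+j) := by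
  unfold gSnd
  rw [piPerm, piPerm, drop_drop', getD_drop']
  ring_nf

/-- value of `sT` -/
lemma sT_val {a : ℕ} (ha : a < r) (x : Fin (r+1)) :
    ((sT r a x : Fin (r+1)) : ℕ) = if (x:ℕ) = a then a+1 else if (x:ℕ) = a+1 then a else (x:ℕ) := by
  have h1 : (((a:ℕ) : Fin (r+1)) : ℕ) = a := Fin.val_cast_of_lt (by omega)
  have h2 : (((a+1:ℕ) : Fin (r+1)) : ℕ) = a+1 := Fin.val_cast_of_lt (by omega)
  have e1 : x = ((a:ℕ) : Fin (r+1)) ↔ (x:ℕ) = a := by rw [Fin.ext_iff, h1]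
  have e2 : x = ((a+1:ℕ) : Fin (r+1)) ↔ (x:ℕ) = a+1 := by rw [Fin.ext_iff, h2]
  rw [sT, Equiv.swap_apply_def]
  by_cases hx1 : (x:ℕ) = a
  · rw [if_pos (e1.mpr hx1), if_pos hx1, h2]
  · rw [if_neg (fun h => hx1 (e1.mp h)), if_neg hx1]
    by_cases hx2 : (x:ℕ) = a+1
    · rw [if_pos (e2.mpr hx2), if_pos hx2, h1]
    · rw [if_neg (fun h => hx2 (e2.mp h)), if_neg hx2]

/-- set of inversions -/
def invs (r : ℕ) (π : Equiv.Perm (Fin (r+1))) : Finset (Fin (r+1) × Fin (r+1)) :=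
  Finset.univ.filter (fun x => x.1 < x.2 ∧ π x.2 < π x.1)

def nInv (r : ℕ) (π : Equiv.Perm (Fin (r+1))) : ℕ := (invs r π).card

lemma mem_invs {π : Equiv.Perm (Fin (r+1))} {x : Fin (r+1) × Fin (r+1)} :
    x ∈ invs r π ↔ x.1 < x.2 ∧ π x.2 < π x.1 := by simp [invs]

lemma nInv_one : nInv r 1 = 0 := by
  rw [nInv, Finset.card_eq_zero, Finset.eq_empty_iff_forall_notMem]
  intro x hx
  rw [mem_invs] at hx
  simp only [Equiv.Perm.one_apply] at hx
  exact absurd hx.2 (not_lt.mpr hx.1.le)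

lemma nInv_inv (π : Equiv.Perm (Fin (r+1))) : nInv r π⁻¹ = nInv r π := by
  rw [nInv, nInv]
  apply Finset.card_bij (fun x _ => ((π⁻¹ x.2 : Fin (r+1)), (π⁻¹ x.1 : Fin (r+1))))
  · intro x hx
    rw [mem_invs] at hx ⊢
    refine ⟨hx.2, ?_⟩
    simp only [Equiv.Perm.apply_inv_self]
    exact hx.1
  · intro x hx y hy hxy
    simp only [Prod.mk.injEq] at hxy
    have h1 := (Equiv.injective π⁻¹) hxy.1
    have h2 := (Equiv.injective π⁻¹) hxy.2
    exact Prod.ext h2 h1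
  · intro y hy
    rw [mem_invs] at hy
    refine ⟨(π y.2, π y.1), ?_, ?_⟩
    · rw [mem_invs]
      simp only [Equiv.Perm.inv_apply_self]
      exact ⟨hy.2, hy.1⟩
    · simp only [Equiv.Perm.inv_apply_self]

lemma sT_lt_sT {a : ℕ} (ha : a < r) {i j : Fin (r+1)} (hij : i < j)
    (hne : ¬(i = ((a:ℕ) : Fin (r+1)) ∧ j = ((a+1:ℕ) : Fin (r+1)))) :
    sT r a i < sT r a j := by
  have h1 : (((a:ℕ) : Fin (r+1)) : ℕ) = a := Fin.val_cast_of_lt (by omega)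
  have h2 : (((a+1:ℕ) : Fin (r+1)) : ℕ) = a+1 := Fin.val_cast_of_lt (by omega)
  have e1 : i = ((a:ℕ) : Fin (r+1)) ↔ (i:ℕ) = a := by rw [Fin.ext_iff, h1]
  have e2 : j = ((a+1:ℕ) : Fin (r+1)) ↔ (j:ℕ) = a+1 := by rw [Fin.ext_iff, h2]
  have hne' : ¬((i:ℕ) = a ∧ (j:ℕ) = a+1) := fun h => hne ⟨e1.mpr h.1, e2.mpr h.2⟩
  have hi := sT_val ha i
  have hj := sT_val ha j
  rw [Fin.lt_def] at hij ⊢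
  split_ifs at hi hj <;> omega

lemma sT_apply_sT (a : ℕ) (x : Fin (r+1)) : sT r a (sT r a x) = x := by
  have := congrArg (fun π : Equiv.Perm (Fin (r+1)) => π x) (sT_mul_self (r := r) a)
  simpa using this

lemma sT_left (a : ℕ) : sT r a ((a:ℕ) : Fin (r+1)) = ((a+1:ℕ) : Fin (r+1)) := by
  rw [sT]; exact Equiv.swap_apply_left _ _
lemma sT_right (a : ℕ) : sT r a ((a+1:ℕ) : Fin (r+1)) = ((a:ℕ) : Fin (r+1)) := by
  rw [sT]; exact Equiv.swap_apply_right _ _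

lemma castA_lt_castB {a : ℕ} (ha : a < r) :
    ((a:ℕ) : Fin (r+1)) < ((a+1:ℕ) : Fin (r+1)) := by
  rw [Fin.lt_def, Fin.val_cast_of_lt (by omega), Fin.val_cast_of_lt (by omega)]
  omega

lemma nInv_mul_sT {π : Equiv.Perm (Fin (r+1))} {a : ℕ} (ha : a < r)
    (h : π ((a:ℕ) : Fin (r+1)) < π ((a+1:ℕ) : Fin (r+1))) :
    nInv r (π * sT r a) = nInv r π + 1 := by
  set A := ((a:ℕ) : Fin (r+1)) with hA
  set B := ((a+1:ℕ) : Fin (r+1)) with hB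
  have hAB : A < B := castA_lt_castB ha
  set s := sT r a with hs
  have hss : ∀ x : Fin (r+1), s (s x) = x := sT_apply_sT a
  have hseq : invs r (π * s) = insert (A, B) ((invs r π).image (fun x => (s x.1, s x.2))) := by
    ext x
    simp only [Finset.mem_insert, Finset.mem_image, mem_invs, Equiv.Perm.mul_apply]
    constructor
    · rintro ⟨h1, h2⟩
      by_cases hx : x = (A, B)
      · exact Or.inl hx
      · refine Or.inr ⟨(s x.1, s x.2), ⟨?_, ?_⟩, ?_⟩
        · apply sT_lt_sT ha h1
          intro hc
          exact hx (Prod.ext hc.1 hc.2)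
        · simpa [hss] using h2
        · simp [hss]
    · rintro (hx | ⟨y, ⟨hy1, hy2⟩, rfl⟩)
      · subst hx
        refine ⟨hAB, ?_⟩
        simp only
        rw [show s B = A from sT_right a, show s A = B from sT_left a]
        exact h
      · constructor
        · apply sT_lt_sT ha hy1
          rintro ⟨hc1, hc2⟩
          rw [hc1, hc2] at hy2
          exact absurd h (not_lt.mpr hy2.le)
        · simpa [hss] using hy2
  have hnotmem : (A, B) ∉ (invs r π).image (fun x => (s x.1, s x.2)) := by
    intro hmem
    rw [Finset.mem_image] at hmem
    obtain ⟨y, hy, hy2⟩ := hmem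
    rw [mem_invs] at hy
    have e1 : y.1 = s A := by
      have := congrArg (fun z => s z) (congrArg Prod.fst hy2)
      simpa [hss] using this
    have e2 : y.2 = s B := by
      have := congrArg (fun z => s z) (congrArg Prod.snd hy2)
      simpa [hss] using this
    rw [e1, e2, show s A = B from sT_left a, show s B = A from sT_right a] at hy
    exact absurd hy.1 (not_lt.mpr hAB.le)
  have hinj : Function.Injective (fun x : Fin (r+1) × Fin (r+1) => (s x.1, s x.2)) := by
    intro x y hxy
    simp only [Prod.mk.injEq] at hxy
    exact Prod.ext (s.injective hxy.1) (s.injective hxy.2)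
  rw [nInv, nInv, hseq, Finset.card_insert_of_notMem hnotmem,
    Finset.card_image_of_injective _ hinj, Nat.add_comm]

lemma nInv_mul_sT' {π : Equiv.Perm (Fin (r+1))} {a : ℕ} (ha : a < r)
    (h : π ((a+1:ℕ) : Fin (r+1)) < π ((a:ℕ) : Fin (r+1))) :
    nInv r (π * sT r a) + 1 = nInv r π := by
  have key := nInv_mul_sT (π := π * sT r a) ha
    (by rw [Equiv.Perm.mul_apply, Equiv.Perm.mul_apply, sT_left, sT_right]; exact h)
  rw [mul_assoc, sT_mul_self, mul_one] at key
  omega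

lemma apply_lt_of_nInv {π : Equiv.Perm (Fin (r+1))} {a : ℕ} (ha : a < r)
    (h : nInv r (π * sT r a) = nInv r π + 1) :
    π ((a:ℕ) : Fin (r+1)) < π ((a+1:ℕ) : Fin (r+1)) := by
  rcases lt_trichotomy (π ((a:ℕ) : Fin (r+1))) (π ((a+1:ℕ) : Fin (r+1))) with h1 | h1 | h1
  · exact h1
  · exact absurd (π.injective h1) (by
      intro hc
      have := castA_lt_castB (r := r) ha
      rw [hc] at this
      exact absurd this (lt_irrefl _))
  · have := nInv_mul_sT' ha h1
    omega

lemma nInv_mul_le (σ τ : Equiv.Perm (Fin (r+1))) :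
    nInv r (σ * τ) ≤ nInv r σ + nInv r τ := by
  classical
  have hsplit := Finset.filter_union_filter_not_eq
    (fun x : Fin (r+1) × Fin (r+1) => τ x.2 < τ x.1) (invs r (σ * τ))
  have hcard : nInv r (σ * τ) ≤
      ((invs r (σ*τ)).filter (fun x => τ x.2 < τ x.1)).card +
      ((invs r (σ*τ)).filter (fun x => ¬ τ x.2 < τ x.1)).card := by
    rw [nInv]
    conv_lhs => rw [← hsplit]
    apply Finset.card_union_le
  have h1 : ((invs r (σ*τ)).filter (fun x => τ x.2 < τ x.1)).card ≤ nInv r τ := by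
    apply Finset.card_le_card
    intro x hx
    rw [Finset.mem_filter, mem_invs] at hx
    rw [mem_invs]
    exact ⟨hx.1.1, hx.2⟩
  have h2 : ((invs r (σ*τ)).filter (fun x => ¬ τ x.2 < τ x.1)).card ≤ nInv r σ := by
    apply Finset.card_le_card_of_injOn (fun x => (τ x.1, τ x.2))
    · intro x hx
      rw [Finset.mem_coe, Finset.mem_filter, mem_invs] at hx
      rw [Finset.mem_coe, mem_invs]
      have hne : τ x.1 ≠ τ x.2 := fun hc => absurd (τ.injective hc) (ne_of_lt hx.1.1)
      refine ⟨lt_of_le_of_ne (not_lt.mp hx.2) hne, ?_⟩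
      have := hx.1.2
      simpa [Equiv.Perm.mul_apply] using this
    · intro x _ y _ hxy
      simp only [Prod.mk.injEq] at hxy
      exact Prod.ext (τ.injective hxy.1) (τ.injective hxy.2)
  omega


-- Section 3: reduced words and root combinatorics
variable {F : Type*} [Field F]

def IsRed (r : ℕ) (v : List ℕ) : Prop := nInv r (sig r v) = v.length

lemma nInv_sT {a : ℕ} (ha : a < r) : nInv r (sT r a) = 1 := by
  have := nInv_mul_sT (π := 1) ha (by
    simp only [Equiv.Perm.one_apply]
    exact castA_lt_castB ha)
  rwa [one_mul, nInv_one, zero_add] at this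

lemma nInv_sig_le (v : List ℕ) (hlet : ∀ i ∈ v, i < r) : nInv r (sig r v) ≤ v.length := by
  induction v with
  | nil => simp [nInv_one]
  | cons a v ih =>
      rw [sig_cons]
      calc nInv r (sT r a * sig r v) ≤ nInv r (sT r a) + nInv r (sig r v) := nInv_mul_le _ _
        _ ≤ 1 + v.length := by
            have := ih (fun i hi => hlet i (List.mem_cons_of_mem a hi))
            have := nInv_sT (hlet a (List.mem_cons_self))
            omega
        _ = (a :: v).length := by simp [Nat.add_comm]

lemma isRed_append {u v : List ℕ} (hlet : ∀ i ∈ u ++ v, i < r) (h : IsRed r (u ++ v)) :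
    IsRed r u ∧ IsRed r v := by
  have hu : nInv r (sig r u) ≤ u.length :=
    nInv_sig_le u (fun i hi => hlet i (List.mem_append_left v hi))
  have hv : nInv r (sig r v) ≤ v.length :=
    nInv_sig_le v (fun i hi => hlet i (List.mem_append_right u hi))
  have hsub : nInv r (sig r (u ++ v)) ≤ nInv r (sig r u) + nInv r (sig r v) := by
    rw [sig_append]; exact nInv_mul_le _ _
  rw [IsRed, List.length_append] at h
  constructor <;> (rw [IsRed]; omega)

lemma isRed_drop {v : List ℕ} (hlet : ∀ i ∈ v, i < r) (h : IsRed r v) (i : ℕ) :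
    IsRed r (v.drop i) := by
  have := isRed_append (u := v.take i) (v := v.drop i)
    (by rw [List.take_append_drop]; exact hlet) (by rw [List.take_append_drop]; exact h)
  exact this.2

lemma isRed_take {v : List ℕ} (hlet : ∀ i ∈ v, i < r) (h : IsRed r v) (i : ℕ) :
    IsRed r (v.take i) := by
  have := isRed_append (u := v.take i) (v := v.drop i)
    (by rw [List.take_append_drop]; exact hlet) (by rw [List.take_append_drop]; exact h)
  exact this.1

/-- positivity of the first root of a reduced word -/
lemma pos_zero {v : List ℕ} (hlet : ∀ i ∈ v, i < r) (hred : IsRed r v) (hne : v ≠ []) :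
    gFst r v 0 < gSnd r v 0 := by
  obtain ⟨a₀, v', rfl⟩ := List.exists_cons_of_ne_nil hne
  have ha₀ : a₀ < r := hlet a₀ (List.mem_cons_self)
  have hσ' : piPerm r (a₀ :: v') 0 = (sig r v')⁻¹ := by
    rw [piPerm_eq]; rfl
  have hget : (a₀ :: v').getD 0 0 = a₀ := rfl
  rw [gFst, gSnd, hσ', hget]
  apply apply_lt_of_nInv ha₀
  have h1 : (sig r v')⁻¹ * sT r a₀ = (sig r (a₀ :: v'))⁻¹ := by
    rw [sig_cons, mul_inv_rev, sT_inv]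
  rw [h1, nInv_inv, nInv_inv]
  have hred' : IsRed r v' :=
    (isRed_append (u := [a₀]) (v := v') hlet hred).2
  rw [hred, hred']
  rfl

lemma pos_j {v : List ℕ} (hlet : ∀ i ∈ v, i < r) (hred : IsRed r v) {j : ℕ}
    (hj : j < v.length) : gFst r v j < gSnd r v j := by
  have h0 : gFst r (v.drop j) 0 < gSnd r (v.drop j) 0 := by
    apply pos_zero (fun i hi => hlet i (List.mem_of_mem_drop hi))
      (isRed_drop hlet hred j)
    intro hc
    have := congrArg List.length hc
    simp at this
    omega
  rw [gFst_drop, gSnd_drop] at h0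
  simpa using h0

/-- boundary lemma: for `1 ≤ m ≤ |v|`, `sig (v.drop m)` keeps the first root positive. -/
lemma bnd_zero {v : List ℕ} (hlet : ∀ i ∈ v, i < r) (hred : IsRed r v) {m : ℕ}
    (hm1 : 1 ≤ m) (hm2 : m ≤ v.length) :
    sig r (v.drop m) (gFst r v 0) < sig r (v.drop m) (gSnd r v 0) := by
  obtain ⟨a₀, v', rfl⟩ := List.exists_cons_of_ne_nil
    (show v ≠ [] by intro hc; rw [hc] at hm2; simp at hm2; omega)
  have ha₀ : a₀ < r := hlet a₀ (List.mem_cons_self)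
  have hσ' : piPerm r (a₀ :: v') 0 = (sig r v')⁻¹ := by rw [piPerm_eq]; rfl
  have hget : (a₀ :: v').getD 0 0 = a₀ := rfl
  rw [gFst, gSnd, hσ', hget]
  have hdrop : (a₀ :: v').drop m = v'.drop (m-1) := by
    obtain ⟨m', rfl⟩ : ∃ m', m = m' + 1 := ⟨m - 1, by omega⟩
    simp
  rw [hdrop]
  set χ := sig r (v'.drop (m-1)) with hχ
  set ρ := sig r (v'.take (m-1)) with hρ
  have hsplit : sig r v' = ρ * χ := by
    rw [hρ, hχ, ← sig_append, List.take_append_drop]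
  have hkey : ∀ x : Fin (r+1), χ ((sig r v')⁻¹ x) = ρ⁻¹ x := by
    intro x
    rw [hsplit, mul_inv_rev, Equiv.Perm.mul_apply, Equiv.Perm.apply_inv_self]
  rw [hkey, hkey]
  apply apply_lt_of_nInv ha₀
  have h1 : ρ⁻¹ * sT r a₀ = (sig r ((a₀ :: v').take m))⁻¹ := by
    obtain ⟨m', rfl⟩ : ∃ m', m = m' + 1 := ⟨m - 1, by omega⟩
    simp only [List.take_succ_cons, sig_cons, mul_inv_rev, sT_inv]
    rfl
  rw [h1, nInv_inv, nInv_inv]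
  have hrt : IsRed r ((a₀ :: v').take m) := isRed_take hlet hred m
  have hrt' : IsRed r (v'.take (m-1)) :=
    isRed_take (fun i hi => hlet i (List.mem_cons_of_mem a₀ hi))
      ((isRed_append (u := [a₀]) (v := v') hlet hred).2) (m-1)
  rw [hrt, hrt']
  rw [List.length_take, List.length_take]
  simp at hm2 ⊢
  omega

/-- general boundary: for `j < m ≤ |v|`. -/
lemma bnd {v : List ℕ} (hlet : ∀ i ∈ v, i < r) (hred : IsRed r v) {j m : ℕ}
    (hjm : j < m) (hm : m ≤ v.length) :
    sig r (v.drop m) (gFst r v j) < sig r (v.drop m) (gSnd r v j) := by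
  have h := bnd_zero (v := v.drop j)
    (fun i hi => hlet i (List.mem_of_mem_drop hi)) (isRed_drop hlet hred j)
    (m := m - j) (by omega) (by simp; omega)
  rw [gFst_drop, gSnd_drop, drop_drop'] at h
  have e1 : j + (m - j) = m := by omega
  have e2 : j + 0 = j := by omega
  rw [e1, e2] at h
  exact h

/-- sign lemma: the full product `sig v` inverts every root of `v`. -/
lemma sgn {v : List ℕ} (hlet : ∀ i ∈ v, i < r) (hred : IsRed r v) {j : ℕ}
    (hj : j < v.length) :
    sig r v (gSnd r v j) < sig r v (gFst r v j) := by
  have ha : v.getD j 0 < r := hlet _ (by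
    rw [List.getD_eq_getElem _ _ hj]; exact List.getElem_mem _)
  set a := v.getD j 0 with hav
  have hdropj : v.drop j = a :: v.drop (j+1) := by
    rw [hav, List.getD_eq_getElem _ _ hj]
    exact List.drop_eq_getElem_cons hj
  set T := sig r (v.take j) with hT
  have hsplit : sig r v = T * (sT r a * sig r (v.drop (j+1))) := by
    rw [hT, ← sig_cons, ← hdropj, ← sig_append, List.take_append_drop]
  have happ : ∀ b : Fin (r+1), sig r v (piPerm r v j b) = T (sT r a b) := by
    intro b
    rw [piPerm_eq, hsplit]
    simp only [Equiv.Perm.mul_apply, Equiv.Perm.apply_inv_self]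
  rw [gFst, gSnd, happ, happ, ← hav, sT_left, sT_right]
  apply apply_lt_of_nInv ha
  have h1 : T * sT r a = sig r (v.take (j+1)) := by
    have ht : v.take (j+1) = v.take j ++ [a] := by
      rw [List.take_succ, List.getElem?_eq_getElem hj, hav, List.getD_eq_getElem _ _ hj]
      rfl
    rw [ht, sig_append, hT]
    congr 1
  rw [h1, isRed_take hlet hred (j+1), isRed_take hlet hred j]
  rw [List.length_take, List.length_take]
  omega


-- Section 4: pattern matrix sets
section Mat
variable (F : Type*) [Field F]

def SPat (r : ℕ) (S : Fin (r+1) → Fin (r+1) → Prop) :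
    Set (Matrix (Fin (r+1)) (Fin (r+1)) F) :=
  {M | ∀ p q, ¬ S p q → M p q = if p = q then 1 else 0}

variable {F} {r : ℕ}

lemma one_mem_SPat {S : Fin (r+1) → Fin (r+1) → Prop} :
    (1 : Matrix (Fin (r+1)) (Fin (r+1)) F) ∈ SPat F r S :=
  fun _ _ _ => Matrix.one_apply

lemma SPat_mono {S S' : Fin (r+1) → Fin (r+1) → Prop} (h : ∀ p q, S p q → S' p q) :
    SPat F r S ⊆ SPat F r S' :=
  fun _ hM p q hpq => hM p q (fun hs => hpq (h _ _ hs))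

lemma elem_mem_SPat {S : Fin (r+1) → Fin (r+1) → Prop} {p q : Fin (r+1)} (hS : S p q) (t : F) :
    (1 + Matrix.single p q t) ∈ SPat F r S := by
  intro p' q' h
  have hne : ¬(p = p' ∧ q = q') := by
    rintro ⟨rfl, rfl⟩
    exact h hS
  rw [Matrix.add_apply, Matrix.single_apply_of_ne p q t p' q' hne, add_zero, Matrix.one_apply]

lemma mul_mem_SPat {S : Fin (r+1) → Fin (r+1) → Prop}
    (htrans : ∀ p u q, S p u → S u q → S p q) (hirr : ∀ p, ¬ S p p)
    {M₁ M₂ : Matrix (Fin (r+1)) (Fin (r+1)) F}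
    (h1 : M₁ ∈ SPat F r S) (h2 : M₂ ∈ SPat F r S) : M₁ * M₂ ∈ SPat F r S := by
  intro p q hpq
  rw [Matrix.mul_apply]
  rcases eq_or_ne p q with rfl | hne
  · rw [if_pos rfl]
    rw [Finset.sum_eq_single p]
    · rw [h1 p p (hirr p), h2 p p (hirr p)]
      simp
    · intro u _ hu
      by_cases hsu : S p u
      · have hnu : ¬ S u p := fun hc => hirr p (htrans _ _ _ hsu hc)
        rw [h2 u p hnu, if_neg hu, mul_zero]
      · rw [h1 p u hsu, if_neg (fun hc => hu hc.symm), zero_mul]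
    · intro h
      exact absurd (Finset.mem_univ p) h
  · rw [if_neg hne]
    apply Finset.sum_eq_zero
    intro u _
    by_cases hup : u = p
    · subst hup
      rw [h2 u q hpq, if_neg hne, mul_zero]
    · by_cases huq : u = q
      · subst huq
        rw [h1 p u hpq, if_neg hne, zero_mul]
      · by_cases hsu : S p u
        · have hnu : ¬ S u q := fun hc => hpq (htrans _ _ _ hsu hc)
          rw [h2 u q hnu, if_neg huq, mul_zero]
        · rw [h1 p u hsu, if_neg (fun hc => hup hc.symm), zero_mul]

lemma prod_mem_SPat {S : Fin (r+1) → Fin (r+1) → Prop}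
    (htrans : ∀ p u q, S p u → S u q → S p q) (hirr : ∀ p, ¬ S p p)
    (L : List (Matrix (Fin (r+1)) (Fin (r+1)) F)) (h : ∀ M ∈ L, M ∈ SPat F r S) :
    L.prod ∈ SPat F r S := by
  induction L with
  | nil => exact one_mem_SPat
  | cons M L ih =>
      rw [List.prod_cons]
      exact mul_mem_SPat htrans hirr (h M (List.mem_cons_self))
        (ih (fun M' hM' => h M' (List.mem_cons_of_mem _ hM')))

lemma mul_entry_add {S : Fin (r+1) → Fin (r+1) → Prop} (hirr : ∀ p, ¬ S p p)
    {M₁ M₂ : Matrix (Fin (r+1)) (Fin (r+1)) F}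
    (h1 : M₁ ∈ SPat F r S) (h2 : M₂ ∈ SPat F r S)
    {p q : Fin (r+1)} (hpq : p ≠ q) (hno : ∀ u, ¬(S p u ∧ S u q)) :
    (M₁ * M₂) p q = M₁ p q + M₂ p q := by
  rw [Matrix.mul_apply]
  have key : ∀ u : Fin (r+1), M₁ p u * M₂ u q =
      (if u = p then M₂ p q else 0) + (if u = q then M₁ p q else 0) := by
    intro u
    by_cases hup : u = p
    · subst hup
      rw [if_pos rfl, if_neg hpq, h1 u u (hirr u), if_pos rfl, one_mul, add_zero]
    · by_cases huq : u = q
      · subst huq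
        rw [if_neg hup, if_pos rfl, h2 u u (hirr u), if_pos rfl, mul_one, zero_add]
      · rw [if_neg hup, if_neg huq, add_zero]
        by_cases hsu : S p u
        · have hnu : ¬ S u q := fun hc => (hno u) ⟨hsu, hc⟩
          rw [h2 u q hnu, if_neg huq, mul_zero]
        · rw [h1 p u hsu, if_neg (fun hc => hup hc.symm), zero_mul]
  rw [Finset.sum_congr rfl (fun u _ => key u), Finset.sum_add_distrib,
    Finset.sum_ite_eq' Finset.univ p (fun _ => M₂ p q),
    Finset.sum_ite_eq' Finset.univ q (fun _ => M₁ p q),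
    if_pos (Finset.mem_univ p), if_pos (Finset.mem_univ q), add_comm]

/-- product of a list of matrices all vanishing at an off-pattern-reachable entry. -/
lemma prod_entry_zero {S : Fin (r+1) → Fin (r+1) → Prop}
    (htrans : ∀ p u q, S p u → S u q → S p q) (hirr : ∀ p, ¬ S p p)
    {p q : Fin (r+1)} (hpq : p ≠ q) (hno : ∀ u, ¬(S p u ∧ S u q))
    (L : List (Matrix (Fin (r+1)) (Fin (r+1)) F))
    (h : ∀ M ∈ L, M ∈ SPat F r S ∧ M p q = 0) :
    L.prod p q = 0 := by
  induction L with
  | nil => rw [List.prod_nil, Matrix.one_apply, if_neg hpq]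
  | cons M L ih =>
      rw [List.prod_cons,
        mul_entry_add hirr (h M (List.mem_cons_self)).1
          (prod_mem_SPat htrans hirr L (fun M' hM' => (h M' (List.mem_cons_of_mem _ hM')).1))
          hpq hno,
        (h M (List.mem_cons_self)).2,
        ih (fun M' hM' => h M' (List.mem_cons_of_mem _ hM')), add_zero]
end Mat


-- Section 5: LU decomposition within a pattern group
section LUsec
variable {F : Type*} [Field F] {r : ℕ}

lemma elem_mul_apply (i j : Fin (r+1)) (t : F) (M : Matrix (Fin (r+1)) (Fin (r+1)) F)
    (p q : Fin (r+1)) :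
    ((1 + Matrix.single i j t) * M) p q
      = M p q + (if p = i then t * M j q else 0) := by
  rw [Matrix.add_mul, Matrix.one_mul, Matrix.add_apply]
  congr 1
  rw [Matrix.mul_apply]
  by_cases hp : p = i
  · rw [if_pos hp]
    subst hp
    rw [Finset.sum_eq_single j]
    · rw [Matrix.single_apply_same]
    · intro u _ hu
      rw [Matrix.single_apply_of_ne p j t p u (fun h => hu h.2.symm), zero_mul]
    · intro h
      exact absurd (Finset.mem_univ j) h
  · rw [if_neg hp]
    apply Finset.sum_eq_zero
    intro u _
    rw [Matrix.single_apply_of_ne i j t p u (fun h => hp h.1.symm), zero_mul]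

lemma elem_cancel (i j : Fin (r+1)) (hij : i ≠ j) (t : F) :
    (1 + Matrix.single i j t) * (1 + Matrix.single i j (-t)) = 1 := by
  have h0 : Matrix.single i j t * Matrix.single i j (-t)
      = (0 : Matrix (Fin (r+1)) (Fin (r+1)) F) :=
    by rw [Matrix.single_mul_single_of_ne]; exact fun h => hij h.symm
  rw [Matrix.add_mul, Matrix.one_mul, Matrix.mul_add, Matrix.mul_one, h0]
  rw [← add_assoc, add_assoc (1 : Matrix (Fin (r+1)) (Fin (r+1)) F), ← Matrix.single_add]
  simp

lemma clear_col [DecidableEq F] (c : Equiv.Perm (Fin (r+1))) (j₀ : Fin (r+1)) :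
    ∀ (n : ℕ) (M : Matrix (Fin (r+1)) (Fin (r+1)) F),
      M ∈ SPat F r (fun p q => c q < c p) →
      (Finset.univ.filter (fun p => j₀ < p ∧ M p j₀ ≠ 0)).card ≤ n →
      (∀ p q : Fin (r+1), q < p → q < j₀ → M p q = 0) →
      ∃ L ∈ SPat F r (fun p q => q < p ∧ c q < c p),
        ∃ M' ∈ SPat F r (fun p q => c q < c p),
          (∀ p q : Fin (r+1), q < p → q ≤ j₀ → M' p q = 0) ∧ M = L * M' := by
  intro n
  induction n with
  | zero =>
      intro M hM hcard hprev
      refine ⟨1, one_mem_SPat, M, hM, ?_, (one_mul M).symm⟩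
      intro p q hqp hqj
      rcases lt_or_eq_of_le hqj with h | h
      · exact hprev p q hqp h
      · subst h
        by_contra hne
        have : p ∈ Finset.univ.filter (fun p => q < p ∧ M p q ≠ 0) :=
          Finset.mem_filter.mpr ⟨Finset.mem_univ _, hqp, hne⟩
        have := Finset.card_pos.mpr ⟨p, this⟩
        omega
  | succ n ih =>
      intro M hM hcard hprev
      by_cases hemp : (Finset.univ.filter (fun p => j₀ < p ∧ M p j₀ ≠ 0)).card = 0
      · exact ih M hM (by omega) hprev
      · have hpos : 0 < (Finset.univ.filter (fun p => j₀ < p ∧ M p j₀ ≠ 0)).card := by omega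
        obtain ⟨p₀, hp₀⟩ := Finset.card_pos.mp hpos
        rw [Finset.mem_filter] at hp₀
        obtain ⟨-, hj₀p₀, ht0⟩ := hp₀
        set t := M p₀ j₀ with htdef
        have hp₀j₀ : p₀ ≠ j₀ := fun h => absurd h.symm (ne_of_lt hj₀p₀)
        have hSc : c j₀ < c p₀ := by
          by_contra hc
          exact ht0 (by rw [htdef, hM p₀ j₀ hc, if_neg hp₀j₀])
        set M' := (1 + Matrix.single p₀ j₀ (-t)) * M with hM'def
        have hM'pat : M' ∈ SPat F r (fun p q => c q < c p) :=
          mul_mem_SPat (S := fun p q => c q < c p) (fun _ _ _ h1 h2 => lt_trans h2 h1)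
            (fun _ => lt_irrefl _)
            (elem_mem_SPat (S := fun p q => c q < c p) (p := p₀) (q := j₀) hSc _) hM
        have happ : ∀ p q : Fin (r+1), M' p q = M p q + (if p = p₀ then (-t) * M j₀ q else 0) :=
          fun p q => elem_mul_apply _ _ _ _ _ _
        have hMjj : M j₀ j₀ = 1 := by rw [hM j₀ j₀ (lt_irrefl _), if_pos rfl]
        have hM'p₀ : M' p₀ j₀ = 0 := by
          rw [happ, if_pos rfl, hMjj, mul_one, ← htdef]
          ring
        have hprev' : ∀ p q : Fin (r+1), q < p → q < j₀ → M' p q = 0 := by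
          intro p q hqp hqj
          rw [happ]
          by_cases hp : p = p₀
          · rw [if_pos hp, hprev p q hqp hqj, hprev j₀ q hqj hqj, mul_zero, add_zero]
          · rw [if_neg hp, hprev p q hqp hqj, add_zero]
        have hsub : (Finset.univ.filter (fun p => j₀ < p ∧ M' p j₀ ≠ 0)) ⊆
            (Finset.univ.filter (fun p => j₀ < p ∧ M p j₀ ≠ 0)).erase p₀ := by
          intro p hp
          rw [Finset.mem_filter] at hp
          obtain ⟨-, hjp, hne⟩ := hp
          have hp0 : p ≠ p₀ := by
            intro h
            subst h
            exact hne hM'p₀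
          rw [Finset.mem_erase]
          refine ⟨hp0, Finset.mem_filter.mpr ⟨Finset.mem_univ _, hjp, ?_⟩⟩
          rw [happ, if_neg hp0, add_zero] at hne
          exact hne
        have hcard' : (Finset.univ.filter (fun p => j₀ < p ∧ M' p j₀ ≠ 0)).card ≤ n := by
          have h1 := Finset.card_le_card hsub
          have h2 : ((Finset.univ.filter (fun p => j₀ < p ∧ M p j₀ ≠ 0)).erase p₀).card
              = (Finset.univ.filter (fun p => j₀ < p ∧ M p j₀ ≠ 0)).card - 1 :=
            Finset.card_erase_of_mem (Finset.mem_filter.mpr ⟨Finset.mem_univ _, hj₀p₀, ht0⟩)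
          omega
        obtain ⟨L, hL, M'', hM'', hcond, heq⟩ := ih M' hM'pat hcard' hprev'
        refine ⟨(1 + Matrix.single p₀ j₀ t) * L, ?_, M'', hM'', hcond, ?_⟩
        · exact mul_mem_SPat (S := fun p q => q < p ∧ c q < c p)
            (fun p u q h1 h2 => ⟨lt_trans h2.1 h1.1, lt_trans h2.2 h1.2⟩)
            (fun p h => lt_irrefl _ h.1)
            (elem_mem_SPat (S := fun p q => q < p ∧ c q < c p) (p := p₀) (q := j₀) ⟨hj₀p₀, hSc⟩ _) hL
        · rw [mul_assoc, ← heq, hM'def, ← mul_assoc, elem_cancel _ _ hp₀j₀, one_mul]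

lemma LU_aux (c : Equiv.Perm (Fin (r+1))) :
    ∀ (d : ℕ) (M : Matrix (Fin (r+1)) (Fin (r+1)) F),
      M ∈ SPat F r (fun p q => c q < c p) →
      (∀ p q : Fin (r+1), q < p → (q:ℕ) + d ≤ r → M p q = 0) →
      ∃ L ∈ SPat F r (fun p q => q < p ∧ c q < c p),
        ∃ U ∈ SPat F r (fun p q => p < q ∧ c q < c p), M = L * U := by
  classical
  intro d
  induction d with
  | zero =>
      intro M hM hcl
      refine ⟨1, one_mem_SPat, M, ?_, (one_mul M).symm⟩
      intro p q hpq
      rcases lt_trichotomy p q with h | h | h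
      · have : ¬ c q < c p := fun hc => hpq ⟨h, hc⟩
        exact hM p q this
      · subst h
        exact hM p p (lt_irrefl _)
      · rw [hcl p q h (by omega), if_neg (fun hc => (ne_of_lt h) hc.symm)]
  | succ d ih =>
      intro M hM hcl
      set j₀ : Fin (r+1) := ⟨r - d, by omega⟩ with hj₀
      obtain ⟨L1, hL1, M', hM', hcond, heq⟩ := clear_col c j₀ _ M hM le_rfl
        (by
          intro p q hqp hqj
          apply hcl p q hqp
          have : (q:ℕ) < r - d := hqj
          omega)
      obtain ⟨L2, hL2, U, hU, heq2⟩ := ih M' hM'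
        (by
          intro p q hqp hqd
          apply hcond p q hqp
          show (q:ℕ) ≤ r - d
          omega)
      refine ⟨L1 * L2, ?_, U, hU, ?_⟩
      · exact mul_mem_SPat (S := fun p q => q < p ∧ c q < c p)
          (fun p u q h1 h2 => ⟨lt_trans h2.1 h1.1, lt_trans h2.2 h1.2⟩)
          (fun p h => lt_irrefl _ h.1) hL1 hL2
      · rw [mul_assoc, ← heq2, heq]

lemma LU (c : Equiv.Perm (Fin (r+1))) (M : Matrix (Fin (r+1)) (Fin (r+1)) F)
    (hM : M ∈ SPat F r (fun p q => c q < c p)) :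
    ∃ L ∈ SPat F r (fun p q => q < p ∧ c q < c p),
      ∃ U ∈ SPat F r (fun p q => p < q ∧ c q < c p), M = L * U :=
  LU_aux c (r+1) M hM (fun p q _ hq => absurd hq (by omega))

end LUsec


-- Section 6: surjectivity of ordered products (positive part)
section Surj
variable {F : Type*} [Field F] {r : ℕ}

lemma surjPos : ∀ (v : List ℕ), (∀ i ∈ v, i < r) → IsRed r v →
    ∀ M : Matrix (Fin (r+1)) (Fin (r+1)) F,
    (∀ p q : Fin (r+1), ¬(p < q ∧ sig r v q < sig r v p) → M p q = if p = q then 1 else 0) →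
    ∃ t : ℕ → F, M = ((List.range v.length).map
        (fun j => 1 + Matrix.single (gFst r v j) (gSnd r v j) (t j))).prod := by
  intro v
  induction v with
  | nil =>
      intro _ _ M hM
      refine ⟨fun _ => 0, ?_⟩
      simp only [List.length_nil, List.range_zero, List.map_nil, List.prod_nil]
      ext p q
      rw [hM p q (by
        rintro ⟨h1, h2⟩
        simp only [sig_nil, Equiv.Perm.one_apply] at h2
        exact absurd h2 (not_lt.mpr h1.le)), Matrix.one_apply]
  | cons a₀ v' ih =>
      intro hlet hred M hM
      have ha₀ : a₀ < r := hlet a₀ (List.mem_cons_self)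
      have hlet' : ∀ i ∈ v', i < r := fun i hi => hlet i (List.mem_cons_of_mem _ hi)
      have hred' : IsRed r v' := (isRed_append (u := [a₀]) hlet hred).2
      set σ' := sig r v' with hσ'def
      set A : Fin (r+1) := ((a₀ : ℕ) : Fin (r+1)) with hAdef
      set B : Fin (r+1) := ((a₀+1 : ℕ) : Fin (r+1)) with hBdef
      have hAval : (A : ℕ) = a₀ := Fin.val_cast_of_lt (by omega)
      have hBval : (B : ℕ) = a₀ + 1 := Fin.val_cast_of_lt (by omega)
      set u := σ'⁻¹ A with hudef
      set u' := σ'⁻¹ B with hu'def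
      have hσu : σ' u = A := Equiv.Perm.apply_inv_self σ' A
      have hσu' : σ' u' = B := Equiv.Perm.apply_inv_self σ' B
      have hσuval : (σ' u : ℕ) = a₀ := by rw [hσu, hAval]
      have hσu'val : (σ' u' : ℕ) = a₀ + 1 := by rw [hσu', hBval]
      have hx0 : gFst r (a₀ :: v') 0 = u := by rw [gFst, piPerm_eq]; rfl
      have hy0 : gSnd r (a₀ :: v') 0 = u' := by rw [gSnd, piPerm_eq]; rfl
      have hApos : u < u' := by
        have := pos_zero hlet hred (List.cons_ne_nil a₀ v')
        rwa [hx0, hy0] at this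
      have hiffu : ∀ x : Fin (r+1), x = u ↔ (σ' x : ℕ) = a₀ := by
        intro x
        constructor
        · rintro rfl; exact hσuval
        · intro h
          have : σ' x = σ' u := Fin.ext (by rw [hσuval]; exact h)
          exact σ'.injective this
      have hiffu' : ∀ x : Fin (r+1), x = u' ↔ (σ' x : ℕ) = a₀ + 1 := by
        intro x
        constructor
        · rintro rfl; exact hσu'val
        · intro h
          have : σ' x = σ' u' := Fin.ext (by rw [hσu'val]; exact h)
          exact σ'.injective this
      have hsig : ∀ x : Fin (r+1), sig r (a₀ :: v') x = sT r a₀ (σ' x) := by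
        intro x; rw [sig_cons]; rfl
      have hstv := sT_val (r := r) ha₀
      set t₀ := M u u' with ht₀def
      set M' := (1 + Matrix.single u u' (-t₀)) * M with hM'def
      have happ : ∀ p q : Fin (r+1), M' p q = M p q + (if p = u then (-t₀) * M u' q else 0) :=
        fun p q => elem_mul_apply _ _ _ _ _ _
      have hMdiag : ∀ x : Fin (r+1), M x x = 1 := by
        intro x
        rw [hM x x (fun h => lt_irrefl _ h.1), if_pos rfl]
      have hM' : ∀ p q : Fin (r+1), ¬(p < q ∧ σ' q < σ' p) →
          M' p q = if p = q then 1 else 0 := by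
        intro p q hpq
        rw [happ]
        by_cases hp : p = u
        · subst hp
          by_cases hq : q = u'
          · subst hq
            rw [if_pos rfl, hMdiag, ← ht₀def, if_neg (ne_of_lt hApos)]
            ring
          · by_cases hq2 : q = u
            · subst hq2
              rw [if_pos rfl, hMdiag, if_pos rfl]
              have hz : M u' u = 0 := by
                rw [hM u' u (fun h => absurd h.1 (not_lt.mpr hApos.le)),
                  if_neg (fun h => (ne_of_lt hApos) h.symm)]
              rw [hz]
              ring
            · -- q ∉ {u, u'}
              have hQ1 : (σ' q : ℕ) ≠ a₀ := fun h => hq2 ((hiffu q).mpr h)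
              have hQ2 : (σ' q : ℕ) ≠ a₀ + 1 := fun h => hq ((hiffu' q).mpr h)
              have hz1 : M u q = 0 := by
                rw [hM u q ?side, if_neg (fun h => hq2 h.symm)]
                case side =>
                  rintro ⟨h1, h2⟩
                  apply hpq
                  refine ⟨h1, ?_⟩
                  rw [hsig, hsig] at h2
                  have h2v := Fin.lt_def.mp h2
                  have e1 := hstv (σ' q)
                  have e2 := hstv (σ' u)
                  rw [Fin.lt_def]
                  split_ifs at e1 e2 <;> omega
              have hz2 : M u' q = 0 := by
                rw [hM u' q ?side2, if_neg (fun h => hq h.symm)]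
                case side2 =>
                  rintro ⟨h1, h2⟩
                  apply hpq
                  have h1' : u < q := lt_trans hApos h1
                  refine ⟨h1', ?_⟩
                  rw [hsig, hsig] at h2
                  have h2v := Fin.lt_def.mp h2
                  have e1 := hstv (σ' q)
                  have e2 := hstv (σ' u')
                  rw [Fin.lt_def]
                  split_ifs at e1 e2 <;> omega
              rw [hz1, hz2, if_pos rfl, if_neg (fun h => hq2 h.symm)]
              ring
        · rw [if_neg hp, add_zero]
          apply hM
          rintro ⟨h1, h2⟩
          apply hpq
          refine ⟨h1, ?_⟩
          have hP1 : (σ' p : ℕ) ≠ a₀ := fun h => hp ((hiffu p).mpr h)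
          have hPQ : (σ' p : ℕ) ≠ (σ' q : ℕ) := by
            intro h
            have : p = q := σ'.injective (Fin.ext h)
            exact (ne_of_lt h1) this
          rw [hsig, hsig] at h2
          have h2v := Fin.lt_def.mp h2
          have e1 := hstv (σ' q)
          have e2 := hstv (σ' p)
          rw [Fin.lt_def]
          split_ifs at e1 e2 <;> omega
      obtain ⟨t', ht'⟩ := ih hlet' hred' M' hM'
      refine ⟨fun j => if j = 0 then t₀ else t' (j-1), ?_⟩
      have hMeq : M = (1 + Matrix.single u u' t₀) * M' := by
        rw [hM'def, ← mul_assoc, elem_cancel u u' (ne_of_lt hApos) t₀, one_mul]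
      rw [hMeq, ht']
      have htail : List.map
            (fun j => 1 + Matrix.single (gFst r v' j) (gSnd r v' j) (t' j))
            (List.range v'.length)
          = List.map ((fun j => 1 + Matrix.single (gFst r (a₀ :: v') j)
              (gSnd r (a₀ :: v') j) (if j = 0 then t₀ else t' (j-1))) ∘ Nat.succ)
            (List.range v'.length) := by
        apply List.map_congr_left
        intro j hj
        simp only [Function.comp_apply]
        have e1 : gFst r (a₀ :: v') (Nat.succ j) = gFst r v' j := by
          have := gFst_drop (r := r) (a₀ :: v') 1 j
          rw [show 1 + j = j + 1 from Nat.add_comm 1 j] at this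
          simpa using this.symm
        have e2 : gSnd r (a₀ :: v') (Nat.succ j) = gSnd r v' j := by
          have := gSnd_drop (r := r) (a₀ :: v') 1 j
          rw [show 1 + j = j + 1 from Nat.add_comm 1 j] at this
          simpa using this.symm
        rw [e1, e2]
        simp
      have hlen : (a₀ :: v').length = v'.length + 1 := rfl
      rw [hlen, List.range_succ_eq_map, List.map_cons, List.prod_cons, List.map_map, ← htail]
      simp [hx0, hy0]

end Surj


-- Section 7: surjectivity of ordered products (negative part)
section SurjN
variable {F : Type*} [Field F] {r : ℕ}

lemma surjNeg : ∀ (m : ℕ) (v : List ℕ), (∀ i ∈ v, i < r) → IsRed r v → m ≤ v.length →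
    ∀ M : Matrix (Fin (r+1)) (Fin (r+1)) F,
    (∀ p q : Fin (r+1), ¬(q < p ∧ sig r v p < sig r v q ∧
        sig r (v.drop m) q < sig r (v.drop m) p) → M p q = if p = q then 1 else 0) →
    ∃ t : ℕ → F, M = ((List.range m).map
        (fun j => 1 + Matrix.single (gSnd r v j) (gFst r v j) (t j))).prod := by
  intro m
  induction m with
  | zero =>
      intro v _ _ _ M hM
      refine ⟨fun _ => 0, ?_⟩
      simp only [List.range_zero, List.map_nil, List.prod_nil]
      ext p q
      rw [hM p q (by
        rintro ⟨h1, h2, h3⟩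
        rw [List.drop_zero] at h3
        exact absurd h3 (not_lt.mpr h2.le)), Matrix.one_apply]
  | succ m ih =>
      intro v hlet hred hm M hM
      obtain ⟨a₀, v', rfl⟩ := List.exists_cons_of_ne_nil
        (show v ≠ [] by intro hc; rw [hc] at hm; simp at hm)
      have ha₀ : a₀ < r := hlet a₀ (List.mem_cons_self)
      have hlet' : ∀ i ∈ v', i < r := fun i hi => hlet i (List.mem_cons_of_mem _ hi)
      have hred' : IsRed r v' := (isRed_append (u := [a₀]) hlet hred).2
      have hm' : m ≤ v'.length := by simpa using hm
      set σ' := sig r v' with hσ'def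
      set χ := sig r (v'.drop m) with hχdef
      have hdropeq : (a₀ :: v').drop (m+1) = v'.drop m := rfl
      set A : Fin (r+1) := ((a₀ : ℕ) : Fin (r+1)) with hAdef
      set B : Fin (r+1) := ((a₀+1 : ℕ) : Fin (r+1)) with hBdef
      have hAval : (A : ℕ) = a₀ := Fin.val_cast_of_lt (by omega)
      have hBval : (B : ℕ) = a₀ + 1 := Fin.val_cast_of_lt (by omega)
      set u := σ'⁻¹ A with hudef
      set u' := σ'⁻¹ B with hu'def
      have hσu : σ' u = A := Equiv.Perm.apply_inv_self σ' A
      have hσu' : σ' u' = B := Equiv.Perm.apply_inv_self σ' B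
      have hσuval : (σ' u : ℕ) = a₀ := by rw [hσu, hAval]
      have hσu'val : (σ' u' : ℕ) = a₀ + 1 := by rw [hσu', hBval]
      have hx0 : gFst r (a₀ :: v') 0 = u := by rw [gFst, piPerm_eq]; rfl
      have hy0 : gSnd r (a₀ :: v') 0 = u' := by rw [gSnd, piPerm_eq]; rfl
      have hApos : u < u' := by
        have := pos_zero hlet hred (List.cons_ne_nil a₀ v')
        rwa [hx0, hy0] at this
      have hχlt : χ u < χ u' := by
        have := bnd_zero hlet hred (m := m+1) (by omega) hm
        rwa [hx0, hy0, hdropeq, ← hχdef] at this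
      have hiffu : ∀ x : Fin (r+1), x = u ↔ (σ' x : ℕ) = a₀ := by
        intro x
        constructor
        · rintro rfl; exact hσuval
        · intro h
          exact σ'.injective (Fin.ext (by rw [hσuval]; exact h))
      have hiffu' : ∀ x : Fin (r+1), x = u' ↔ (σ' x : ℕ) = a₀ + 1 := by
        intro x
        constructor
        · rintro rfl; exact hσu'val
        · intro h
          exact σ'.injective (Fin.ext (by rw [hσu'val]; exact h))
      have hsig : ∀ x : Fin (r+1), sig r (a₀ :: v') x = sT r a₀ (σ' x) := by
        intro x; rw [sig_cons]; rfl
      have hstv := sT_val (r := r) ha₀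
      set t₀ := M u' u with ht₀def
      set M' := (1 + Matrix.single u' u (-t₀)) * M with hM'def
      have happ : ∀ p q : Fin (r+1), M' p q = M p q + (if p = u' then (-t₀) * M u q else 0) :=
        fun p q => elem_mul_apply _ _ _ _ _ _
      have hMdiag : ∀ x : Fin (r+1), M x x = 1 := by
        intro x
        rw [hM x x (fun h => lt_irrefl _ h.2.2), if_pos rfl]
      have hM' : ∀ p q : Fin (r+1), ¬(q < p ∧ σ' p < σ' q ∧ χ q < χ p) →
          M' p q = if p = q then 1 else 0 := by
        intro p q hpq
        rw [happ]
        by_cases hp : p = u'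
        · subst hp
          by_cases hq : q = u
          · subst hq
            rw [if_pos rfl, hMdiag, ← ht₀def, if_neg (fun h => (ne_of_lt hApos) h.symm)]
            ring
          · by_cases hq2 : q = u'
            · subst hq2
              rw [if_pos rfl, hMdiag, if_pos rfl]
              have hz : M u u' = 0 := by
                rw [hM u u' (fun h => absurd h.1 (not_lt.mpr hApos.le)),
                  if_neg (ne_of_lt hApos)]
              rw [hz]
              ring
            · -- q ∉ {u, u'}
              have hQ1 : (σ' q : ℕ) ≠ a₀ := fun h => hq ((hiffu q).mpr h)
              have hQ2 : (σ' q : ℕ) ≠ a₀ + 1 := fun h => hq2 ((hiffu' q).mpr h)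
              have hz1 : M u' q = 0 := by
                rw [hM u' q ?side, if_neg (fun h => hq2 h.symm)]
                case side =>
                  rintro ⟨h1, h2, h3⟩
                  apply hpq
                  refine ⟨h1, ?_, ?_⟩
                  · rw [hsig, hsig] at h2
                    have h2v := Fin.lt_def.mp h2
                    have e1 := hstv (σ' q)
                    have e2 := hstv (σ' u')
                    rw [Fin.lt_def]
                    split_ifs at e1 e2 <;> omega
                  · rw [hdropeq, ← hχdef] at h3
                    exact h3
              have hz2 : M u q = 0 := by
                rw [hM u q ?side2, if_neg (fun h => hq h.symm)]
                case side2 =>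
                  rintro ⟨h1, h2, h3⟩
                  apply hpq
                  refine ⟨lt_trans h1 hApos, ?_, ?_⟩
                  · rw [hsig, hsig] at h2
                    have h2v := Fin.lt_def.mp h2
                    have e1 := hstv (σ' q)
                    have e2 := hstv (σ' u)
                    rw [Fin.lt_def]
                    split_ifs at e1 e2 <;> omega
                  · rw [hdropeq, ← hχdef] at h3
                    exact lt_trans h3 hχlt
              rw [hz1, hz2, if_pos rfl, if_neg (fun h => hq2 h.symm)]
              ring
        · rw [if_neg hp, add_zero]
          apply hM
          rintro ⟨h1, h2, h3⟩
          apply hpq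
          have hP1 : (σ' p : ℕ) ≠ a₀ + 1 := fun h => hp ((hiffu' p).mpr h)
          have hPQ : (σ' p : ℕ) ≠ (σ' q : ℕ) := by
            intro h
            exact (ne_of_lt h1) ((σ'.injective (Fin.ext h)).symm ▸ rfl)
          refine ⟨h1, ?_, by rw [hdropeq, ← hχdef] at h3; exact h3⟩
          rw [hsig, hsig] at h2
          have h2v := Fin.lt_def.mp h2
          have e1 := hstv (σ' q)
          have e2 := hstv (σ' p)
          rw [Fin.lt_def]
          split_ifs at e1 e2 <;> omega
      obtain ⟨t', ht'⟩ := ih v' hlet' hred' hm' M' hM'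
      refine ⟨fun j => if j = 0 then t₀ else t' (j-1), ?_⟩
      have hMeq : M = (1 + Matrix.single u' u t₀) * M' := by
        rw [hM'def, ← mul_assoc, elem_cancel u' u (fun h => (ne_of_lt hApos) h.symm) t₀, one_mul]
      rw [hMeq, ht']
      have htail : List.map
            (fun j => 1 + Matrix.single (gSnd r v' j) (gFst r v' j) (t' j))
            (List.range m)
          = List.map ((fun j => 1 + Matrix.single (gSnd r (a₀ :: v') j)
              (gFst r (a₀ :: v') j) (if j = 0 then t₀ else t' (j-1))) ∘ Nat.succ)
            (List.range m) := by
        apply List.map_congr_left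
        intro j hj
        simp only [Function.comp_apply]
        have e1 : gFst r (a₀ :: v') (Nat.succ j) = gFst r v' j := by
          have := gFst_drop (r := r) (a₀ :: v') 1 j
          rw [show 1 + j = j + 1 from Nat.add_comm 1 j] at this
          simpa using this.symm
        have e2 : gSnd r (a₀ :: v') (Nat.succ j) = gSnd r v' j := by
          have := gSnd_drop (r := r) (a₀ :: v') 1 j
          rw [show 1 + j = j + 1 from Nat.add_comm 1 j] at this
          simpa using this.symm
        rw [e1, e2]
        simp
      rw [List.range_succ_eq_map, List.map_cons, List.prod_cons, List.map_map, ← htail]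
      simp [hx0, hy0]

end SurjN


-- Section 8: inversion count of revPerm
section Count
variable {r : ℕ}

lemma nInv_revPerm : nInv r (Fin.revPerm : Equiv.Perm (Fin (r+1))) = r * (r+1) / 2 := by
  classical
  have hset : invs r (Fin.revPerm : Equiv.Perm (Fin (r+1)))
      = Finset.univ.filter (fun x : Fin (r+1) × Fin (r+1) => x.1 < x.2) := by
    ext x
    rw [invs, Finset.mem_filter, Finset.mem_filter]
    constructor
    · rintro ⟨h1, h2, -⟩; exact ⟨h1, h2⟩
    · rintro ⟨h1, h2⟩
      refine ⟨h1, h2, ?_⟩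
      show Fin.rev x.2 < Fin.rev x.1
      exact Fin.rev_lt_rev.mpr h2
  set S1 := Finset.univ.filter (fun x : Fin (r+1) × Fin (r+1) => x.1 < x.2) with hS1
  set S2 := Finset.univ.filter (fun x : Fin (r+1) × Fin (r+1) => x.2 < x.1) with hS2
  have hbij : S1.card = S2.card := by
    apply Finset.card_bij (fun x _ => (x.2, x.1))
    · intro x hx
      rw [hS1, Finset.mem_filter] at hx
      rw [hS2, Finset.mem_filter]
      exact ⟨Finset.mem_univ _, hx.2⟩
    · intro x _ y _ hxy
      simp only [Prod.mk.injEq] at hxy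
      exact Prod.ext hxy.2 hxy.1
    · intro y hy
      rw [hS2, Finset.mem_filter] at hy
      exact ⟨(y.2, y.1), Finset.mem_filter.mpr ⟨Finset.mem_univ _, hy.2⟩, rfl⟩
  have hdisj : Disjoint S1 S2 := by
    rw [Finset.disjoint_left]
    intro x hx1 hx2
    rw [hS1, Finset.mem_filter] at hx1
    rw [hS2, Finset.mem_filter] at hx2
    exact absurd hx2.2 (not_lt.mpr hx1.2.le)
  have hunion : S1 ∪ S2 = (Finset.univ : Finset (Fin (r+1))).offDiag := by
    ext x
    rw [Finset.mem_union, hS1, hS2, Finset.mem_filter, Finset.mem_filter, Finset.mem_offDiag]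
    constructor
    · rintro (⟨-, h⟩ | ⟨-, h⟩)
      · exact ⟨Finset.mem_univ _, Finset.mem_univ _, ne_of_lt h⟩
      · exact ⟨Finset.mem_univ _, Finset.mem_univ _, (ne_of_lt h).symm⟩
    · rintro ⟨-, -, hne⟩
      rcases lt_or_gt_of_ne hne with h | h
      · exact Or.inl ⟨Finset.mem_univ _, h⟩
      · exact Or.inr ⟨Finset.mem_univ _, h⟩
  have hcards : S1.card + S2.card = (r+1) * (r+1) - (r+1) := by
    rw [← Finset.card_union_of_disjoint hdisj, hunion, Finset.offDiag_card]
    simp [Finset.card_univ]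
  have hprod : (r+1) * (r+1) = r * (r+1) + (r+1) := by ring
  rw [nInv, hset]
  omega

end Count


end CellAux

open CellAux in
theorem commute_elementary_through_cell
    (r : ℕ) (hr : 1 ≤ r) (w : List ℕ)
    (hlen : w.length = r * (r + 1) / 2)
    (hletters : ∀ i ∈ w, i < r)
    (hred : (w.map (sT r)).prod = Fin.revPerm)
    (k : ℕ) (hk1 : 1 ≤ k) (hk2 : k ≤ r * (r + 1) / 2)
    (z : F) (g : Matrix (Fin (r + 1)) (Fin (r + 1)) F)
    (hg : g ∈ cellG F r w k) :
    ∃! g' : Matrix (Fin (r + 1)) (Fin (r + 1)) F,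
      g' ∈ cellG F r w k ∧
      eNegM F r w (k - 1) z * g = g' * eNegM F r w (k - 1) z := by
  classical
  have hRedw : IsRed r w := by
    rw [IsRed, show sig r w = Fin.revPerm from hred, nInv_revPerm, hlen]
  have hKlen : k - 1 < w.length := by omega
  have haw : w.getD (k-1) 0 ∈ w := by
    rw [List.getD_eq_getElem _ _ hKlen]
    exact List.getElem_mem _
  have ha : w.getD (k-1) 0 < r := hletters _ haw
  set a := w.getD (k-1) 0 with hadef
  set c := sig r (w.drop k) with hcdef
  set X := gFst r w (k-1) with hXdef
  set Y := gSnd r w (k-1) with hYdef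
  set A : Fin (r+1) := ((a : ℕ) : Fin (r+1)) with hAdef
  set B : Fin (r+1) := ((a+1 : ℕ) : Fin (r+1)) with hBdef
  have hAval : (A : ℕ) = a := Fin.val_cast_of_lt (by omega)
  have hBval : (B : ℕ) = a+1 := Fin.val_cast_of_lt (by omega)
  have hkk : k - 1 + 1 = k := by omega
  have hXc : X = c⁻¹ A := by
    rw [hXdef, gFst, piPerm_eq, hkk]
  have hYc : Y = c⁻¹ B := by
    rw [hYdef, gSnd, piPerm_eq, hkk]
  have hcX : c X = A := by rw [hXc]; exact Equiv.Perm.apply_inv_self _ _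
  have hcY : c Y = B := by rw [hYc]; exact Equiv.Perm.apply_inv_self _ _
  have hcXval : (c X : ℕ) = a := by rw [hcX, hAval]
  have hcYval : (c Y : ℕ) = a + 1 := by rw [hcY, hBval]
  have hXY : X < Y := pos_j hletters hRedw hKlen
  have hYXne : Y ≠ X := fun h => absurd (h ▸ hXY) (lt_irrefl _)
  have hirr : ∀ p : Fin (r+1), ¬ ((fun p q : Fin (r+1) => c q < c p) p p) :=
    fun _ => lt_irrefl _
  have htrans : ∀ p u q : Fin (r+1), c u < c p → c q < c u → c q < c p :=
    fun _ _ _ h1 h2 => lt_trans h2 h1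
  have hno : ∀ u : Fin (r+1), ¬ (c u < c Y ∧ c X < c u) := by
    rintro u ⟨h1, h2⟩
    rw [Fin.lt_def, hcYval] at h1
    rw [Fin.lt_def, hcXval] at h2
    omega
  have heSc : c X < c Y := by rw [Fin.lt_def, hcXval, hcYval]; omega
  have hlet' : ∀ i ∈ w.drop k, i < r := fun i hi => hletters i (List.mem_of_mem_drop hi)
  have hred' : IsRed r (w.drop k) := isRed_drop hletters hRedw k
  -- the boundary-(k-1) permutation values
  have hwdropK : w.drop (k-1) = a :: w.drop k := by
    rw [List.drop_eq_getElem_cons hKlen, hkk, hadef, List.getD_eq_getElem _ _ hKlen]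
  have hdX : sig r (w.drop (k-1)) X = B := by
    rw [hwdropK, sig_cons, Equiv.Perm.mul_apply, ← hcdef, hcX, hAdef, hBdef]
    exact sT_left a
  have hdY : sig r (w.drop (k-1)) Y = A := by
    rw [hwdropK, sig_cons, Equiv.Perm.mul_apply, ← hcdef, hcY, hAdef, hBdef]
    exact sT_right a
  -- factor lemmas
  have hnegfac : ∀ j : ℕ, j < k - 1 → ∀ tv : F,
      (1 + Matrix.single (gSnd r w j) (gFst r w j) tv) ∈
        SPat F r (fun p q => c q < c p) ∧
      (1 + Matrix.single (gSnd r w j) (gFst r w j) tv) Y X = 0 := by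
    intro j hj tv
    have hbnd : c (gFst r w j) < c (gSnd r w j) := by
      have := bnd hletters hRedw (show j < k by omega) (show k ≤ w.length by omega)
      rwa [← hcdef] at this
    refine ⟨elem_mem_SPat (S := fun p q => c q < c p) hbnd tv, ?_⟩
    have hne2 : ¬ (gSnd r w j = Y ∧ gFst r w j = X) := by
      rintro ⟨h1, h2⟩
      have hd := bnd hletters hRedw (show j < k-1 from hj) (show k-1 ≤ w.length by omega)
      rw [h1, h2, hdX, hdY] at hd
      exact absurd hd (not_lt.mpr (castA_lt_castB ha).le)
    rw [Matrix.add_apply, Matrix.one_apply, if_neg hYXne,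
      Matrix.single_apply_of_ne _ _ _ _ _ hne2, add_zero]
  have hposfac : ∀ j : ℕ, k + j < w.length → ∀ tv : F,
      (1 + Matrix.single (gFst r w (k+j)) (gSnd r w (k+j)) tv) ∈
        SPat F r (fun p q => c q < c p) ∧
      (1 + Matrix.single (gFst r w (k+j)) (gSnd r w (k+j)) tv) Y X = 0 := by
    intro j hj tv
    have hlen2 : j < (w.drop k).length := by rw [List.length_drop]; omega
    have hsg : c (gSnd r w (k+j)) < c (gFst r w (k+j)) := by
      have := sgn hlet' hred' hlen2
      rwa [gFst_drop, gSnd_drop, ← hcdef] at this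
    refine ⟨elem_mem_SPat (S := fun p q => c q < c p) hsg tv, ?_⟩
    have hposj : gFst r w (k+j) < gSnd r w (k+j) := pos_j hletters hRedw hj
    have hne2 : ¬ (gFst r w (k+j) = Y ∧ gSnd r w (k+j) = X) := by
      rintro ⟨h1, h2⟩
      rw [h1, h2] at hposj
      exact absurd hXY (not_lt.mpr hposj.le)
    rw [Matrix.add_apply, Matrix.one_apply, if_neg hYXne,
      Matrix.single_apply_of_ne _ _ _ _ _ hne2, add_zero]
  -- membership of cell elements in the pattern, with vanishing coordinate
  have hcellmem : ∀ g₀, g₀ ∈ cellG F r w k →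
      g₀ ∈ SPat F r (fun p q => c q < c p) ∧ g₀ Y X = 0 := by
    rintro g₀ ⟨t, rfl⟩
    have hLA : ∀ Mx ∈ (List.range (k-1)).map (fun j => eNegM F r w j (t j)),
        Mx ∈ SPat F r (fun p q => c q < c p) ∧ Mx Y X = 0 := by
      intro Mx hMx
      rw [List.mem_map] at hMx
      obtain ⟨j, hj, rfl⟩ := hMx
      rw [List.mem_range] at hj
      exact hnegfac j hj (t j)
    have hLB : ∀ Mx ∈ (List.range (r * (r + 1) / 2 - k)).map
        (fun j => ePosM F r w (k + j) (t (k + j))),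
        Mx ∈ SPat F r (fun p q => c q < c p) ∧ Mx Y X = 0 := by
      intro Mx hMx
      rw [List.mem_map] at hMx
      obtain ⟨j, hj, rfl⟩ := hMx
      rw [List.mem_range] at hj
      exact hposfac j (by omega) (t (k + j))
    have hApat := prod_mem_SPat (S := fun p q => c q < c p) htrans hirr _
      (fun Mx hMx => (hLA Mx hMx).1)
    have hBpat := prod_mem_SPat (S := fun p q => c q < c p) htrans hirr _
      (fun Mx hMx => (hLB Mx hMx).1)
    refine ⟨mul_mem_SPat (S := fun p q => c q < c p) htrans hirr hApat hBpat, ?_⟩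
    rw [mul_entry_add hirr hApat hBpat hYXne hno,
      prod_entry_zero htrans hirr hYXne hno _ hLA,
      prod_entry_zero htrans hirr hYXne hno _ hLB, add_zero]
  -- converse: pattern plus vanishing coordinate implies cell membership
  have hconv : ∀ M : Matrix (Fin (r+1)) (Fin (r+1)) F,
      M ∈ SPat F r (fun p q => c q < c p) → M Y X = 0 → M ∈ cellG F r w k := by
    intro M hMpat hMzero
    obtain ⟨L, hL, U, hU, hMLU⟩ := LU c M hMpat
    obtain ⟨s, hs⟩ := surjNeg k w hletters hRedw (by omega) L (by
      intro p q hnpq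
      apply hL
      rintro ⟨h1, h2⟩
      refine absurd ?_ hnpq
      refine ⟨h1, ?_, by rw [← hcdef]; exact h2⟩
      rw [show sig r w = Fin.revPerm from hred]
      exact Fin.rev_lt_rev.mpr h1)
    obtain ⟨s', hs'⟩ := surjPos (w.drop k) hlet' hred' U (by
      intro p q hnpq
      apply hU
      rintro ⟨h1, h2⟩
      exact absurd ⟨h1, by rw [← hcdef]; exact h2⟩ hnpq)
    rw [← hkk, List.range_succ, List.map_append, List.prod_append] at hs
    have hsingle : ((List.map (fun j => 1 + Matrix.single (gSnd r w j)
        (gFst r w j) (s j)) [k-1]).prod) = 1 + Matrix.single Y X (s (k-1)) := by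
      simp [← hYdef, ← hXdef]
    rw [hsingle] at hs
    set LA := ((List.range (k-1)).map
      (fun j => 1 + Matrix.single (gSnd r w j) (gFst r w j) (s j))).prod with hLAdef
    have hLAfac : ∀ Mx ∈ (List.range (k-1)).map
        (fun j => 1 + Matrix.single (gSnd r w j) (gFst r w j) (s j)),
        Mx ∈ SPat F r (fun p q => c q < c p) ∧ Mx Y X = 0 := by
      intro Mx hMx
      rw [List.mem_map] at hMx
      obtain ⟨j, hj, rfl⟩ := hMx
      rw [List.mem_range] at hj
      exact hnegfac j hj (s j)
    have hLApat : LA ∈ SPat F r (fun p q => c q < c p) :=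
      prod_mem_SPat (S := fun p q => c q < c p) htrans hirr _ (fun Mx hMx => (hLAfac Mx hMx).1)
    have hLAzero : LA Y X = 0 :=
      prod_entry_zero htrans hirr hYXne hno _ hLAfac
    have hUpat' : U ∈ SPat F r (fun p q => c q < c p) :=
      SPat_mono (fun p q h => h.2) hU
    have hUzero : U Y X = 0 := by
      rw [hU Y X (fun h => absurd h.1 (not_lt.mpr hXY.le)), if_neg hYXne]
    have hZpat : (1 + Matrix.single Y X (s (k-1))) ∈
        SPat F r (fun p q => c q < c p) :=
      elem_mem_SPat (S := fun p q => c q < c p) heSc _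
    have hZval : (1 + Matrix.single Y X (s (k-1))) Y X = s (k-1) := by
      rw [Matrix.add_apply, Matrix.one_apply, if_neg hYXne,
        Matrix.single_apply_same, zero_add]
    have hMval : M Y X = LA Y X + ((1 + Matrix.single Y X (s (k-1))) Y X + U Y X) := by
      rw [hMLU, hs, mul_assoc,
        mul_entry_add hirr hLApat
          (mul_mem_SPat (S := fun p q => c q < c p) htrans hirr hZpat hUpat') hYXne hno,
        mul_entry_add hirr hZpat hUpat' hYXne hno]
    have hsK : s (k-1) = 0 := by
      rw [hMzero, hLAzero, hUzero, hZval, zero_add, add_zero] at hMval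
      exact hMval.symm
    have hZone : (1 + Matrix.single Y X (s (k-1)))
        = (1 : Matrix (Fin (r+1)) (Fin (r+1)) F) := by
      rw [hsK, Matrix.single_zero, add_zero]
    rw [hZone, mul_one] at hs
    refine ⟨fun n => if n < k then s n else s' (n - k), ?_⟩
    have hlist1 : (List.range (k-1)).map
        (fun j => eNegM F r w j (if j < k then s j else s' (j - k)))
        = (List.range (k-1)).map
          (fun j => 1 + Matrix.single (gSnd r w j) (gFst r w j) (s j)) := by
      apply List.map_congr_left
      intro j hj
      rw [List.mem_range] at hj
      rw [eNegM, if_pos (by omega)]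
    have hlist2 : (List.range (r * (r + 1) / 2 - k)).map
        (fun j => ePosM F r w (k + j) (if k + j < k then s (k + j) else s' (k + j - k)))
        = (List.range ((w.drop k).length)).map
          (fun j => 1 + Matrix.single (gFst r (w.drop k) j) (gSnd r (w.drop k) j)
            (s' j)) := by
      rw [List.length_drop, hlen]
      apply List.map_congr_left
      intro j hj
      rw [ePosM, gFst_drop, gSnd_drop, if_neg (by omega), (show k + j - k = j by omega)]
    rw [hlist1, hlist2, ← hLAdef, ← hs, ← hs']
    exact hMLU
  -- the elementary matrix and its inverse
  have heform : eNegM F r w (k-1) z = 1 + Matrix.single Y X z := rfl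
  set einv := 1 + Matrix.single Y X (-z) with heinvdef
  have hee : eNegM F r w (k-1) z * einv = 1 := by
    rw [heform]
    exact elem_cancel Y X hYXne z
  have hei : einv * eNegM F r w (k-1) z = 1 := by
    rw [heform]
    have := elem_cancel Y X hYXne (-z)
    rwa [neg_neg] at this
  have hepat : eNegM F r w (k-1) z ∈ SPat F r (fun p q => c q < c p) := by
    rw [heform]
    exact elem_mem_SPat (S := fun p q => c q < c p) heSc z
  have heinvpat : einv ∈ SPat F r (fun p q => c q < c p) :=
    elem_mem_SPat (S := fun p q => c q < c p) heSc (-z)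
  have heval : eNegM F r w (k-1) z Y X = z := by
    rw [heform, Matrix.add_apply, Matrix.one_apply, if_neg hYXne,
      Matrix.single_apply_same, zero_add]
  have heinvval : einv Y X = -z := by
    rw [heinvdef, Matrix.add_apply, Matrix.one_apply, if_neg hYXne,
      Matrix.single_apply_same, zero_add]
  obtain ⟨hgpat, hgzero⟩ := hcellmem g hg
  have hegpat : eNegM F r w (k-1) z * g ∈ SPat F r (fun p q => c q < c p) :=
    mul_mem_SPat (S := fun p q => c q < c p) htrans hirr hepat hgpat
  have hg'pat : eNegM F r w (k-1) z * g * einv ∈ SPat F r (fun p q => c q < c p) :=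
    mul_mem_SPat (S := fun p q => c q < c p) htrans hirr hegpat heinvpat
  have hg'zero : (eNegM F r w (k-1) z * g * einv) Y X = 0 := by
    rw [mul_entry_add hirr hegpat heinvpat hYXne hno,
      mul_entry_add hirr hepat hgpat hYXne hno, heval, hgzero, heinvval]
    ring
  refine ⟨eNegM F r w (k-1) z * g * einv, ⟨hconv _ hg'pat hg'zero, ?_⟩, ?_⟩
  · rw [mul_assoc (eNegM F r w (k-1) z * g) einv (eNegM F r w (k-1) z), hei, mul_one]
  · rintro y ⟨-, hy2⟩
    calc y = y * (eNegM F r w (k-1) z * einv) := by rw [hee, mul_one]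
      _ = (y * eNegM F r w (k-1) z) * einv := by rw [mul_assoc]
      _ = eNegM F r w (k-1) z * g * einv := by rw [← hy2]
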